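/- For every integer k ≥ 1 and every (y_0, …, y_k) ∈ ℝ^{k+1}, det((p_1(x_i, y_j))_{i,j=0}^{k}) = (2π)^{−(k+1)/2} · e^{−(k+1)(k+2)/(6k)} · ( ∏_{j=0}^{k} e^{−y_j²/2 − y_j} ) · ∏_{0 ≤ i < j ≤ k} ( e^{2 y_j / k} − e^{2 y_i / k} ). -/

import Mathlib

/-- The one-dimensional heat kernel `p_t(a,b)`. -/
noncomputable def heatK (t a b : ℝ) : ℝ :=
    (Real.sqrt (2 * Real.pi * t))⁻¹ * Real.exp (-(a - b) ^ 2 / (2 * t))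

/-- The equally spaced starting points `x_i = (2i - k)/k`. -/
noncomputable def xPt (k : ℕ) (i : Fin (k + 1)) : ℝ := (2 * (i : ℝ) - k) / k

lemma sum_range_cast' (n : ℕ) : ∑ i ∈ Finset.range n, (i : ℝ) = n * (n - 1) / 2 := by
  induction n with
  | zero => simp
  | succ n ih => rw [Finset.sum_range_succ, ih]; push_cast; ring

lemma sum_range_sq' (n : ℕ) :
    ∑ i ∈ Finset.range n, (i : ℝ) ^ 2 = n * (n - 1) * (2 * n - 1) / 6 := by
  induction n with
  | zero => simp
  | succ n ih => rw [Finset.sum_range_succ, ih]; push_cast; ring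

theorem det_heat_kernel_vandermonde (k : ℕ) (hk : 1 ≤ k) (y : Fin (k + 1) → ℝ) :
    Matrix.det (Matrix.of fun i j : Fin (k + 1) => heatK 1 (xPt k i) (y j)) =
      (2 * Real.pi) ^ (-(((k : ℝ) + 1) / 2)) *
        Real.exp (-(((k : ℝ) + 1) * ((k : ℝ) + 2)) / (6 * k)) *
        (∏ j : Fin (k + 1), Real.exp (-(y j) ^ 2 / 2 - y j)) *
        ∏ i : Fin (k + 1), ∏ j ∈ Finset.Ioi i,
          (Real.exp (2 * y j / k) - Real.exp (2 * y i / k)) := by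
  have hk0 : (k : ℝ) ≠ 0 := Nat.cast_ne_zero.mpr (by omega)
  set c : Fin (k + 1) → ℝ := fun i =>
    (Real.sqrt (2 * Real.pi))⁻¹ * Real.exp (-(xPt k i) ^ 2 / 2) with hc
  set d : Fin (k + 1) → ℝ := fun j => Real.exp (-(y j) ^ 2 / 2 - y j) with hd
  set v : Fin (k + 1) → ℝ := fun j => Real.exp (2 * y j / k) with hv
  have key : (Matrix.of fun i j : Fin (k + 1) => heatK 1 (xPt k i) (y j)) =
      Matrix.of (fun i j => c i * ((Matrix.of fun i j : Fin (k+1) => d j *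
        ((Matrix.vandermonde v).transpose) i j) i j)) := by
    ext i j
    have hx : -(xPt k i - y j) ^ 2 / 2 =
        -(xPt k i) ^ 2 / 2 + ((-(y j) ^ 2 / 2 - y j) + (i : ℕ) * (2 * y j / k)) := by
      unfold xPt; field_simp; ring
    simp only [Matrix.of_apply, heatK, mul_one, hx, Real.exp_add, Real.exp_nat_mul,
      Matrix.transpose_apply, Matrix.vandermonde, hc, hd, hv]
    ring
  rw [key, Matrix.det_mul_column, Matrix.det_mul_row, Matrix.det_transpose,
    Matrix.det_vandermonde]
  -- the sum of squares of the x_i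
  have hsum : ∑ i : Fin (k + 1), (xPt k i) ^ 2 = ((k:ℝ) + 1) * ((k:ℝ) + 2) / (3 * k) := by
    have h1 : ∑ i : Fin (k + 1), (xPt k i) ^ 2
        = ∑ i ∈ Finset.range (k + 1), ((2 * (i:ℝ) - k) / k) ^ 2 :=
      Fin.sum_univ_eq_sum_range (fun i => ((2 * (i:ℝ) - k) / k) ^ 2) (k + 1)
    rw [h1]
    have h2 : ∑ i ∈ Finset.range (k + 1), ((2 * (i:ℝ) - k) / k) ^ 2
        = (∑ i ∈ Finset.range (k + 1), (4 * (i:ℝ) ^ 2 - 4 * (k:ℝ) * (i:ℝ) + (k:ℝ) ^ 2)) / (k:ℝ) ^ 2 := by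
      rw [Finset.sum_div]
      refine Finset.sum_congr rfl fun i _ => ?_
      field_simp; ring
    rw [h2]
    have h3 : ∑ i ∈ Finset.range (k + 1), (4 * (i:ℝ) ^ 2 - 4 * (k:ℝ) * (i:ℝ) + (k:ℝ) ^ 2)
        = 4 * (∑ i ∈ Finset.range (k + 1), (i:ℝ) ^ 2)
          - 4 * (k:ℝ) * (∑ i ∈ Finset.range (k + 1), (i:ℝ)) + ((k:ℝ) + 1) * (k:ℝ) ^ 2 := by
      rw [Finset.sum_add_distrib, Finset.sum_sub_distrib, ← Finset.mul_sum, ← Finset.mul_sum,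
        Finset.sum_const, Finset.card_range, nsmul_eq_mul]
      push_cast; ring
    rw [h3, sum_range_sq', sum_range_cast']
    push_cast
    field_simp
    ring
  -- compute the product of the c i
  have hprodc : ∏ i : Fin (k + 1), c i =
      (2 * Real.pi) ^ (-(((k : ℝ) + 1) / 2)) *
        Real.exp (-(((k : ℝ) + 1) * ((k : ℝ) + 2)) / (6 * k)) := by
    rw [hc, Finset.prod_mul_distrib, Finset.prod_const, ← Real.exp_sum,
      Finset.card_univ, Fintype.card_fin]
    have hexp : ∑ i : Fin (k + 1), (-(xPt k i) ^ 2 / 2)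
        = -(((k:ℝ) + 1) * ((k:ℝ) + 2)) / (6 * k) := by
      have : ∑ i : Fin (k + 1), (-(xPt k i) ^ 2 / 2)
          = -(∑ i : Fin (k + 1), (xPt k i) ^ 2) / 2 := by
        rw [← Finset.sum_div, ← Finset.sum_neg_distrib]
      rw [this, hsum]; field_simp; ring
    rw [hexp]
    congr 1
    have h2pi : (0:ℝ) < 2 * Real.pi := by positivity
    rw [Real.sqrt_eq_rpow, ← Real.rpow_neg_one ((2 * Real.pi) ^ ((1:ℝ)/2)),
      ← Real.rpow_natCast (((2 * Real.pi) ^ ((1:ℝ)/2)) ^ (-1:ℝ)) (k + 1),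
      ← Real.rpow_mul h2pi.le, ← Real.rpow_mul h2pi.le]
    push_cast
    ring_nf
  rw [hprodc]
  ring
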